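/- Let q = p^e be a prime power, let 0 ≤ l ≤ e−1, let n ≤ q and k ≤ n. Let a_1,…,a_n be distinct elements of F_q and v_1,…,v_n nonzero elements of F_q, and set u_i = Π_{1≤j≤n, j≠i} (a_i − a_j)^{−1}. A codeword c = (v_1 f(a_1), …, v_n f(a_n), f_{k−1}) of the extended code GRS_k(a,v,∞) (with f ∈ F_q[x], deg f ≤ k−1 and f_{k−1} the coefficient of x^{k−1} in f) lies in GRS_k(a,v,∞)^{⊥_l} if and only if there exists a polynomial g(x) ∈ F_q[x] with deg g ≤ n−k such that (v_1^{p^l+1} f(a_1)^{p^l}, …, v_n^{p^l+1} f(a_n)^{p^l}, f_{k−1}^{p^l}) = (u_1 g(a_1), …, u_n g(a_n), −g_{n−k}), where g_{n−k} is the coefficient of x^{n−k} in g. -/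

import Mathlib

open Finset Polynomial

lemma sum_weight_mul_eval {F : Type*} [Field F] {n : ℕ} {a : Fin n → F}
    (ha : Function.Injective a) {P : Polynomial F} (hP : P.degree < (n : WithBot ℕ)) :
    ∑ i, (∏ j ∈ Finset.univ.erase i, (a i - a j)⁻¹) * P.eval (a i) = P.coeff (n - 1) := by
  classical
  have hinj : Set.InjOn a ↑(univ : Finset (Fin n)) := ha.injOn
  have hcard : #(univ : Finset (Fin n)) = n := Finset.card_fin n
  have hPint := Lagrange.eq_interpolate hinj (by rwa [hcard] : P.degree < (#(univ : Finset (Fin n)) : WithBot ℕ))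
  conv_rhs => rw [hPint]
  rw [Lagrange.interpolate_apply, Polynomial.finset_sum_coeff]
  refine Finset.sum_congr rfl fun i _ => ?_
  rw [Polynomial.coeff_C_mul]
  have hb : (Lagrange.basis univ a i).coeff (n - 1)
      = ∏ j ∈ Finset.univ.erase i, (a i - a j)⁻¹ := by
    rw [Lagrange.basis_eq_prod_sub_inv_mul_nodal_div (Finset.mem_univ i),
      ← Lagrange.nodal_erase_eq_nodal_div (Finset.mem_univ i), Polynomial.coeff_C_mul]
    have hm : (Lagrange.nodal ((univ : Finset (Fin n)).erase i) a).Monic := Lagrange.nodal_monic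
    have hd : (Lagrange.nodal ((univ : Finset (Fin n)).erase i) a).natDegree = n - 1 := by
      rw [Lagrange.natDegree_nodal, Finset.card_erase_of_mem (Finset.mem_univ i), hcard]
    rw [← hd, hm.coeff_natDegree, mul_one]
    rfl
  rw [hb]; ring


/-- The `l`-Galois dual of a linear code `C ⊆ F^n` over a field `F` of characteristic `p`:
the set of `x` with `∑ i, y i * (x i)^(p^l) = 0` for all codewords `y ∈ C`. -/
def galoisDual (p l : ℕ) [Fact p.Prime] {F : Type*} [Field F] [CharP F p] {n : ℕ}
    (C : Submodule F (Fin n → F)) : Submodule F (Fin n → F) where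
  carrier := {x | ∀ y ∈ C, ∑ i, y i * x i ^ p ^ l = 0}
  zero_mem' := by
    intro y _
    have hp : p ^ l ≠ 0 := pow_ne_zero _ (Fact.out (p := p.Prime)).ne_zero
    simp [zero_pow hp]
  add_mem' := by
    intro a b ha hb y hy
    have h : ∀ i : Fin _, (a + b) i ^ p ^ l = a i ^ p ^ l + b i ^ p ^ l := by
      intro i
      simpa using add_pow_char_pow (a i) (b i) (p := p) (n := l)
    calc ∑ i, y i * (a + b) i ^ p ^ l
        = (∑ i, y i * a i ^ p ^ l) + ∑ i, y i * b i ^ p ^ l := by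
          rw [← Finset.sum_add_distrib]; exact Finset.sum_congr rfl fun i _ => by
            rw [h i, mul_add]
      _ = 0 := by rw [ha y hy, hb y hy, add_zero]
  smul_mem' := by
    intro c x hx y hy
    have h : ∀ i : Fin _, (c • x) i ^ p ^ l = c ^ p ^ l * x i ^ p ^ l := by
      intro i; simp [mul_pow]
    calc ∑ i, y i * (c • x) i ^ p ^ l
        = c ^ p ^ l * ∑ i, y i * x i ^ p ^ l := by
          rw [Finset.mul_sum]; exact Finset.sum_congr rfl fun i _ => by rw [h i]; ring
      _ = 0 := by rw [hx y hy, mul_zero]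

/-- The evaluation map for the extended GRS code:
`f ↦ (v₁ f(a₁), …, vₙ f(aₙ), f_{k-1})`, where `f_{k-1}` is the coefficient of `x^{k-1}`. -/
noncomputable def grsEvalExt (F : Type*) [Field F] (n k : ℕ) (a v : Fin n → F) :
    Polynomial F →ₗ[F] (Fin (n + 1) → F) where
  toFun f := Fin.snoc (fun i => v i * f.eval (a i)) (f.coeff (k - 1))
  map_add' f g := by
    funext x
    refine Fin.lastCases ?_ (fun i => ?_) x <;>
      simp [Fin.snoc_last, Fin.snoc_castSucc, mul_add]
  map_smul' c f := by
    funext x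
    refine Fin.lastCases ?_ (fun i => ?_) x
    · simp [Fin.snoc_last, smul_eq_mul]
    · simp [Fin.snoc_castSucc, smul_eq_mul]; ring

/-- The extended generalized Reed–Solomon code `GRS_k(a, v, ∞)`. -/
noncomputable def GRSCodeExt (F : Type*) [Field F] (n k : ℕ) (a v : Fin n → F) :
    Submodule F (Fin (n + 1) → F) :=
  (Polynomial.degreeLT F k).map (grsEvalExt F n k a v)

/-- Lemma 3: a codeword `(v₁ f(a₁), …, vₙ f(aₙ), f_{k-1})` of the extended
code `GRS_k(a, v, ∞)` lies in `GRS_k(a, v, ∞)^{⊥_l}` iff there is a polynomial `g` with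
`deg g ≤ n - k` such that `vᵢ^{pˡ+1} f(aᵢ)^{pˡ} = uᵢ g(aᵢ)` for all `i` and
`f_{k-1}^{pˡ} = -g_{n-k}`, where `uᵢ = ∏_{j ≠ i} (aᵢ - aⱼ)⁻¹`. -/
theorem extGrs_mem_galoisDual_iff (p e l n k : ℕ) [Fact p.Prime] (he : 0 < e)
    (hl : l ≤ e - 1) (hn : n ≤ p ^ e) (hkn : k ≤ n)
    (a v : Fin n → GaloisField p e) (ha : Function.Injective a) (hv : ∀ i, v i ≠ 0)
    (f : Polynomial (GaloisField p e)) (hf : f ∈ Polynomial.degreeLT (GaloisField p e) k) :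
    Fin.snoc (fun i => v i * f.eval (a i)) (f.coeff (k - 1)) ∈
        galoisDual p l (GRSCodeExt (GaloisField p e) n k a v) ↔
      ∃ g ∈ Polynomial.degreeLT (GaloisField p e) (n - k + 1),
        (∀ i, v i ^ (p ^ l + 1) * f.eval (a i) ^ p ^ l =
          (∏ j ∈ Finset.univ.erase i, (a i - a j)⁻¹) * g.eval (a i)) ∧
        f.coeff (k - 1) ^ p ^ l = -g.coeff (n - k) := by
  classical
  set q := p ^ l with hq
  have hq0 : q ≠ 0 := pow_ne_zero _ (Fact.out (p := p.Prime)).ne_zero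
  set u : Fin n → GaloisField p e := fun i => ∏ j ∈ Finset.univ.erase i, (a i - a j)⁻¹ with hu_def
  have hu : ∀ i, u i ≠ 0 := by
    intro i
    refine Finset.prod_ne_zero_iff.2 fun j hj => inv_ne_zero (sub_ne_zero.2 ?_)
    exact fun hEq => (Finset.mem_erase.1 hj).1 (ha hEq).symm
  have hsumsnoc : ∀ h : Polynomial (GaloisField p e),
      ∑ i : Fin (n + 1), (grsEvalExt (GaloisField p e) n k a v h) i *
        (Fin.snoc (fun i => v i * f.eval (a i)) (f.coeff (k - 1)) : Fin (n + 1) → GaloisField p e) i ^ q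
      = (∑ i : Fin n, (v i * h.eval (a i)) * (v i * f.eval (a i)) ^ q)
        + h.coeff (k - 1) * f.coeff (k - 1) ^ q := by
    intro h
    rw [Fin.sum_univ_castSucc]
    congr 1
    · refine Finset.sum_congr rfl fun i _ => ?_
      have h1 : (grsEvalExt (GaloisField p e) n k a v h) i.castSucc = v i * h.eval (a i) := by
        show (Fin.snoc (fun i => v i * h.eval (a i)) (h.coeff (k - 1)) : Fin (n+1) → GaloisField p e) i.castSucc = _
        rw [Fin.snoc_castSucc]
      have h2 : (Fin.snoc (fun i => v i * f.eval (a i)) (f.coeff (k - 1)) : Fin (n+1) → GaloisField p e) i.castSucc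
          = v i * f.eval (a i) := Fin.snoc_castSucc _ _ _
      rw [h1, h2]
    · have h1 : (grsEvalExt (GaloisField p e) n k a v h) (Fin.last n) = h.coeff (k - 1) := by
        show (Fin.snoc (fun i => v i * h.eval (a i)) (h.coeff (k - 1)) : Fin (n+1) → GaloisField p e) (Fin.last n) = _
        rw [Fin.snoc_last]
      have h2 : (Fin.snoc (fun i => v i * f.eval (a i)) (f.coeff (k - 1)) : Fin (n+1) → GaloisField p e) (Fin.last n)
          = f.coeff (k - 1) := Fin.snoc_last _ _
      rw [h1, h2]
  have hiff : (Fin.snoc (fun i => v i * f.eval (a i)) (f.coeff (k - 1)) ∈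
      galoisDual p l (GRSCodeExt (GaloisField p e) n k a v)) ↔
      ∀ h ∈ Polynomial.degreeLT (GaloisField p e) k,
        (∑ i : Fin n, (v i * h.eval (a i)) * (v i * f.eval (a i)) ^ q)
          + h.coeff (k - 1) * f.coeff (k - 1) ^ q = 0 := by
    constructor
    · intro H h hh
      have := H (grsEvalExt (GaloisField p e) n k a v h) (Submodule.mem_map.2 ⟨h, hh, rfl⟩)
      rwa [hsumsnoc h] at this
    · intro H y hy
      obtain ⟨h, hh, rfl⟩ := Submodule.mem_map.1 hy
      show ∑ i : Fin (n+1), _ = 0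
      rw [hsumsnoc h]
      exact H h hh
  rw [hiff]
  rcases Nat.eq_zero_or_pos k with hk0 | hk
  · subst hk0
    have hf0 : f = 0 := by
      have := Polynomial.mem_degreeLT.1 hf
      rw [Nat.cast_zero, Nat.WithBot.lt_zero_iff, Polynomial.degree_eq_bot] at this
      exact this
    subst hf0
    constructor
    · intro _
      refine ⟨0, ?_, fun i => by simp [zero_pow hq0], by simp [zero_pow hq0]⟩
      rw [Polynomial.mem_degreeLT]
      simpa using WithBot.bot_lt_coe (n - 0 + 1)
    · intro _ h hh
      simp [zero_pow hq0]
  have hn1 : 1 ≤ n := le_trans hk hkn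
  constructor
  · intro H
    set r : Fin n → GaloisField p e := fun i => (v i ^ (q + 1) * f.eval (a i) ^ q) * (u i)⁻¹ with hr_def
    set G : Polynomial (GaloisField p e) := Lagrange.interpolate Finset.univ a r with hG_def
    have hinj : Set.InjOn a ↑(univ : Finset (Fin n)) := ha.injOn
    have hGdeg : G.degree < (n : WithBot ℕ) := by
      have := Lagrange.degree_interpolate_lt r hinj
      rwa [Finset.card_fin] at this
    have hGnat : G.natDegree < n := by
      rcases eq_or_ne G 0 with h0 | h0
      · rw [h0]; simpa using (show 0 < n by omega)
      · exact (Polynomial.natDegree_lt_iff_degree_lt h0).2 (by exact_mod_cast hGdeg)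
    have hW : ∀ i, u i * G.eval (a i) = v i ^ (q + 1) * f.eval (a i) ^ q := by
      intro i
      rw [hG_def, Lagrange.eval_interpolate_at_node r hinj (Finset.mem_univ i), hr_def]
      field_simp
      rw [mul_assoc]; exact mul_div_cancel_left₀ _ (hu i)
    have hGeval : ∀ i : Fin n, G.eval (a i) = ∑ m ∈ Finset.range n, G.coeff m * a i ^ m :=
      fun i => Polynomial.eval_eq_sum_range' hGnat (a i)
    set eS : ℕ → GaloisField p e := fun s => ∑ i, u i * a i ^ s with heS_def
    have he : ∀ s, s < n → eS s = if s = n - 1 then 1 else 0 := by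
      intro s hs
      have hdeg : (X ^ s : Polynomial (GaloisField p e)).degree < (n : WithBot ℕ) := by
        rw [Polynomial.degree_X_pow]; exact_mod_cast hs
      have hsw := sum_weight_mul_eval ha hdeg
      simp only [Polynomial.eval_pow, Polynomial.eval_X] at hsw
      rw [heS_def]
      simp only []
      rw [hsw, Polynomial.coeff_X_pow]
      simp only [eq_comm]
    have E : ∀ t, t < k → (∑ m ∈ Finset.range n, G.coeff m * eS (m + t))
        + (if t = k - 1 then 1 else 0) * f.coeff (k - 1) ^ q = 0 := by
      intro t ht
      have hX : (X ^ t : Polynomial (GaloisField p e)) ∈ Polynomial.degreeLT (GaloisField p e) k := by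
        rw [Polynomial.mem_degreeLT, Polynomial.degree_X_pow]; exact_mod_cast ht
      have hEq := H _ hX
      simp only [Polynomial.eval_pow, Polynomial.eval_X, Polynomial.coeff_X_pow] at hEq
      have hkey : ∑ i : Fin n, (v i * a i ^ t) * (v i * f.eval (a i)) ^ q
          = ∑ m ∈ Finset.range n, G.coeff m * eS (m + t) := by
        have step1 : ∀ i : Fin n, (v i * a i ^ t) * (v i * f.eval (a i)) ^ q
            = (u i * G.eval (a i)) * a i ^ t := by
          intro i
          rw [hW i, mul_pow, pow_succ]
          ring
        calc ∑ i : Fin n, (v i * a i ^ t) * (v i * f.eval (a i)) ^ q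
            = ∑ i : Fin n, (u i * G.eval (a i)) * a i ^ t :=
              Finset.sum_congr rfl fun i _ => step1 i
          _ = ∑ i : Fin n, ∑ m ∈ Finset.range n, G.coeff m * (u i * a i ^ (m + t)) := by
              refine Finset.sum_congr rfl fun i _ => ?_
              rw [hGeval i, Finset.mul_sum, Finset.sum_mul]
              refine Finset.sum_congr rfl fun m _ => ?_
              rw [pow_add]; ring
          _ = ∑ m ∈ Finset.range n, ∑ i : Fin n, G.coeff m * (u i * a i ^ (m + t)) :=
              Finset.sum_comm
          _ = ∑ m ∈ Finset.range n, G.coeff m * eS (m + t) := by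
              refine Finset.sum_congr rfl fun m _ => ?_
              rw [heS_def, Finset.mul_sum]
      rw [hkey] at hEq
      rw [show (if k - 1 = t then (1:GaloisField p e) else 0) = (if t = k - 1 then 1 else 0) from by
        simp only [eq_comm]] at hEq
      exact hEq
    have claimC : ∀ j, j + 2 ≤ k → G.coeff (n - 1 - j) = 0 := by
      intro j
      induction j using Nat.strong_induction_on with
      | _ j IH =>
        intro hj
        have hEt := E j (by omega)
        rw [if_neg (by omega), zero_mul, add_zero] at hEt
        rw [Finset.sum_eq_single (n - 1 - j)] at hEt
        · rwa [show n - 1 - j + j = n - 1 by omega, he (n - 1) (by omega), if_pos rfl,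
            mul_one] at hEt
        · intro m hm hne
          have hmn := Finset.mem_range.1 hm
          rcases lt_trichotomy (m + j) (n - 1) with h1 | h1 | h1
          · rw [he (m + j) (by omega), if_neg (by omega), mul_zero]
          · exact absurd (by omega : m = n - 1 - j) hne
          · have hC : G.coeff m = 0 := by
              have hIH := IH (n - 1 - m) (by omega) (by omega)
              rwa [show n - 1 - (n - 1 - m) = m by omega] at hIH
            rw [hC, zero_mul]
        · intro hnotin
          exact absurd (Finset.mem_range.2 (by omega)) hnotin
    have hGlt : G ∈ Polynomial.degreeLT (GaloisField p e) (n - k + 1) := by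
      rw [Polynomial.mem_degreeLT]
      rw [Polynomial.degree_lt_iff_coeff_zero]
      intro m hm
      rcases lt_or_ge m n with hmn | hmn
      · have hcc := claimC (n - 1 - m) (by omega)
        rwa [show n - 1 - (n - 1 - m) = m by omega] at hcc
      · exact Polynomial.coeff_eq_zero_of_degree_lt
          (lt_of_lt_of_le hGdeg (by exact_mod_cast hmn))
    have hlast : f.coeff (k - 1) ^ q = -G.coeff (n - k) := by
      have hEt := E (k - 1) (by omega)
      rw [if_pos rfl, one_mul] at hEt
      rw [Finset.sum_eq_single (n - k)] at hEt
      · rw [show n - k + (k - 1) = n - 1 by omega, he (n - 1) (by omega), if_pos rfl,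
          mul_one] at hEt
        linear_combination hEt
      · intro m hm hne
        have hmn := Finset.mem_range.1 hm
        rcases lt_or_ge m (n - k) with h1 | h1
        · rw [he (m + (k - 1)) (by omega), if_neg (by omega), mul_zero]
        · have h2 : n - k < m := lt_of_le_of_ne h1 (Ne.symm hne)
          rw [Polynomial.coeff_eq_zero_of_degree_lt
            (lt_of_lt_of_le (Polynomial.mem_degreeLT.1 hGlt) (by exact_mod_cast (by omega : n - k + 1 ≤ m))), zero_mul]
      · intro hnotin
        exact absurd (Finset.mem_range.2 (by omega)) hnotin
    exact ⟨G, hGlt, fun i => (hW i).symm, hlast⟩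
  · rintro ⟨g, hg, hcond, hbeta⟩ h hh
    have hhdeg := Polynomial.mem_degreeLT.1 hh
    have hgdeg := Polynomial.mem_degreeLT.1 hg
    have hghdeg : (g * h).degree < (n : WithBot ℕ) := by
      rcases eq_or_ne g 0 with h0 | h0
      · rw [h0, zero_mul, Polynomial.degree_zero]; exact WithBot.bot_lt_coe n
      rcases eq_or_ne h 0 with h1 | h1
      · rw [h1, mul_zero, Polynomial.degree_zero]; exact WithBot.bot_lt_coe n
      rw [Polynomial.degree_mul]
      rw [Polynomial.degree_eq_natDegree h0, Polynomial.degree_eq_natDegree h1]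
      rw [Polynomial.degree_eq_natDegree h0] at hgdeg
      rw [Polynomial.degree_eq_natDegree h1] at hhdeg
      have hg' : g.natDegree < n - k + 1 := by exact_mod_cast hgdeg
      have hh' : h.natDegree < k := by exact_mod_cast hhdeg
      have hsum : g.natDegree + h.natDegree < n := by omega
      exact_mod_cast hsum
    have hsum : ∑ i : Fin n, u i * (g * h).eval (a i) = (g * h).coeff (n - 1) :=
      sum_weight_mul_eval ha hghdeg
    have hcoeffmul : (g * h).coeff (n - 1) = g.coeff (n - k) * h.coeff (k - 1) := by
      rw [Polynomial.coeff_mul]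
      rw [Finset.sum_eq_single (n - k, k - 1)]
      · rintro ⟨s, t⟩ hmem hne
        have hst : s + t = n - 1 := Finset.HasAntidiagonal.mem_antidiagonal.1 hmem
        rcases lt_or_ge s (n - k) with h1 | h1
        · have ht : k ≤ t := by omega
          rw [Polynomial.coeff_eq_zero_of_degree_lt
            (lt_of_lt_of_le hhdeg (by exact_mod_cast ht)), mul_zero]
        · have hs : n - k + 1 ≤ s := by
            rcases lt_or_eq_of_le h1 with h2 | h2
            · omega
            · exfalso; apply hne; rw [Prod.mk.injEq]; omega
          rw [Polynomial.coeff_eq_zero_of_degree_lt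
            (lt_of_lt_of_le hgdeg (by exact_mod_cast hs)), zero_mul]
      · intro hnotin
        exact absurd (Finset.HasAntidiagonal.mem_antidiagonal.2 (by omega)) hnotin
    have hterm : ∀ i : Fin n, (v i * h.eval (a i)) * (v i * f.eval (a i)) ^ q
        = u i * (g * h).eval (a i) := by
      intro i
      have hstep : (v i * h.eval (a i)) * (v i * f.eval (a i)) ^ q
          = (v i ^ (q + 1) * f.eval (a i) ^ q) * h.eval (a i) := by
        rw [mul_pow, pow_succ]; ring
      rw [hstep, hcond i, Polynomial.eval_mul]
      ring
    calc (∑ i : Fin n, (v i * h.eval (a i)) * (v i * f.eval (a i)) ^ q)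
        + h.coeff (k - 1) * f.coeff (k - 1) ^ q
        = (∑ i : Fin n, u i * (g * h).eval (a i)) + h.coeff (k - 1) * f.coeff (k - 1) ^ q := by
          rw [Finset.sum_congr rfl fun i _ => hterm i]
      _ = g.coeff (n - k) * h.coeff (k - 1) + h.coeff (k - 1) * (-g.coeff (n - k)) := by
          rw [hsum, hcoeffmul, hbeta]
      _ = 0 := by ring
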